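/- Let C be a smooth plane curve over F_q of characteristic p > 2, and suppose the set {P ∈ C over the algebraic closure : Φ(P) ∈ T_P(C)} is finite, of cardinality N. If every F_q-line is tangent to C at some point over the algebraic closure, then q^2 + q + 1 ≤ #C(F_q) + N/2, i.e., 2(q^2 + q + 1) ≤ 2·#C(F_q) + N. -/

import Mathlib

open MvPolynomial

noncomputable section

/-- The projective plane over a field `K`, as the projectivization of `K^3`. -/
abbrev ProjPlane (K : Type*) [Field K] := Projectivization K (Fin 3 → K)

variable {F : Type*} [Field F]

/-- A geometric point (over the algebraic closure) lies on the plane curve defined by `f`. -/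
def OnCurve (f : MvPolynomial (Fin 3) F) (P : ProjPlane (AlgebraicClosure F)) : Prop :=
  aeval P.rep f = 0

/-- A geometric point lies on the `F`-rational line with coefficient vector `a`. -/
def OnLine (a : Fin 3 → F) (P : ProjPlane (AlgebraicClosure F)) : Prop :=
  ∑ i, algebraMap F (AlgebraicClosure F) (a i) * P.rep i = 0

/-- The plane curve defined by `f` is smooth: the gradient of `f` is nonzero at every
geometric point of the curve. -/
def SmoothCurve (f : MvPolynomial (Fin 3) F) : Prop :=
  ∀ P : ProjPlane (AlgebraicClosure F), OnCurve f P → ∃ i, aeval P.rep (pderiv i f) ≠ 0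

/-- The `F`-line with coefficients `a` meets the curve defined by `f` transversely:
the intersection consists of exactly `d` distinct geometric points. -/
def Transverse (f : MvPolynomial (Fin 3) F) (a : Fin 3 → F) (d : ℕ) : Prop :=
  {P : ProjPlane (AlgebraicClosure F) | OnCurve f P ∧ OnLine a P}.ncard = d

/-- The restriction of `f` to the line `t ↦ v + t • w`, as a univariate polynomial. -/
def LinePoly (f : MvPolynomial (Fin 3) F) (v w : Fin 3 → AlgebraicClosure F) :
    Polynomial (AlgebraicClosure F) :=
  aeval (fun i => Polynomial.C (v i) + Polynomial.X * Polynomial.C (w i)) f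

/-- `P` is a flex point of the curve defined by `f`: the tangent line at `P` meets the
curve at `P` with intersection multiplicity at least 3. The tangent line is parametrized
through `P.rep` and a direction `w` lying on the tangent line, independent from `P.rep`. -/
def IsFlex (f : MvPolynomial (Fin 3) F) (P : ProjPlane (AlgebraicClosure F)) : Prop :=
  OnCurve f P ∧ ∃ w : Fin 3 → AlgebraicClosure F,
    (¬ ∃ c : AlgebraicClosure F, w = c • P.rep) ∧
    (∑ i, aeval P.rep (pderiv i f) * w i = 0) ∧
    (Polynomial.X : Polynomial (AlgebraicClosure F)) ^ 3 ∣ LinePoly f P.rep w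

/-- The `F`-line with coefficients `a` is the tangent line to the curve `f` at the
geometric point `P`, i.e. `a` is proportional to the gradient of `f` at `P`. -/
def IsTangentAt (f : MvPolynomial (Fin 3) F) (a : Fin 3 → F)
    (P : ProjPlane (AlgebraicClosure F)) : Prop :=
  OnCurve f P ∧ ∃ c : AlgebraicClosure F, c ≠ 0 ∧
    ∀ i, algebraMap F (AlgebraicClosure F) (a i) = c * aeval P.rep (pderiv i f)

/-- The `q`-power Frobenius map on the projective plane. -/
def FrobPt {K : Type*} [Field K] (q : ℕ) (P : ProjPlane K) : ProjPlane K :=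
  Projectivization.mk K (fun i => P.rep i ^ q) (by
    intro hc
    rcases Nat.eq_zero_or_pos q with h0 | h0
    · have := congrFun hc 0
      simp [h0] at this
    · apply P.rep_nonzero
      funext i
      have := congrFun hc i
      simp only [Pi.zero_apply] at this ⊢
      exact pow_eq_zero_iff h0.ne' |>.mp this)

/-- A geometric point of the projective plane is `F`-rational. -/
def IsRationalPt (P : ProjPlane (AlgebraicClosure F)) : Prop :=
  ∃ v : Fin 3 → F, v ≠ 0 ∧ ∃ c : AlgebraicClosure F, c ≠ 0 ∧
    ∀ i, P.rep i = c * algebraMap F (AlgebraicClosure F) (v i)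

/-- The curve defined by `f` is Frobenius non-classical over `F` (with `q = #F`):
the image of every geometric point of the curve under the `q`-power Frobenius lies on
the tangent line at that point. -/
def FrobeniusNonClassical (f : MvPolynomial (Fin 3) F) (q : ℕ) : Prop :=
  ∀ P : ProjPlane (AlgebraicClosure F), OnCurve f P →
    ∑ i, aeval P.rep (pderiv i f) * P.rep i ^ q = 0


/-- The univariate polynomial obtained by restricting `f` to the parametrized
`F`-rational line `t ↦ v + t • w`. -/
def LinePolyF (f : MvPolynomial (Fin 3) F) (v w : Fin 3 → F) : Polynomial F :=
  aeval (fun i => Polynomial.C (v i) + Polynomial.X * Polynomial.C (w i)) f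

/-- The set of `F`-rational points of the plane curve defined by `f`. -/
def RatPoints (f : MvPolynomial (Fin 3) F) : Set (Projectivization F (Fin 3 → F)) :=
  {P : Projectivization F (Fin 3 → F) | eval P.rep f = 0}

/-- Scaling a homogeneous polynomial's argument. -/
lemma aeval_smul_of_isHomogeneous {S : Type*} [CommRing S] [Algebra F S] {σ : Type*}
    {f : MvPolynomial σ F} {n : ℕ} (hf : f.IsHomogeneous n) (c : S) (x : σ → S) :
    aeval (c • x) f = c ^ n * aeval x f := by
  rw [aeval_def, aeval_def, eval₂_eq, eval₂_eq, Finset.mul_sum]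
  refine Finset.sum_congr rfl fun d hd => ?_
  have hdeg : ∑ i ∈ d.support, d i = n := by
    have h := hf (mem_support_iff.mp hd)
    rw [← h]
    exact DFunLike.congr_fun Finsupp.degree_eq_weight_one d
  have hprod : ∏ i ∈ d.support, ((c • x) i) ^ d i
      = c ^ n * ∏ i ∈ d.support, (x i) ^ d i := by
    calc ∏ i ∈ d.support, ((c • x) i) ^ d i
        = ∏ i ∈ d.support, (c ^ d i * (x i) ^ d i) := by
          refine Finset.prod_congr rfl fun i _ => ?_
          simp [mul_pow]
      _ = (∏ i ∈ d.support, c ^ d i) * ∏ i ∈ d.support, (x i) ^ d i :=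
          Finset.prod_mul_distrib
      _ = c ^ n * ∏ i ∈ d.support, (x i) ^ d i := by
          rw [Finset.prod_pow_eq_pow_sum, hdeg]
  rw [hprod]; ring

/-- Euler's identity for homogeneous polynomials. -/
lemma euler_identity {σ : Type*} [Fintype σ] [DecidableEq σ]
    {f : MvPolynomial σ F} {n : ℕ} (hf : f.IsHomogeneous n) :
    ∑ i : σ, X i * pderiv i f = (n : F) • f := by
  conv_lhs => rw [f.as_sum]
  conv_rhs => rw [f.as_sum]
  rw [Finset.smul_sum]
  simp only [map_sum, Finset.mul_sum]
  rw [Finset.sum_comm]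
  refine Finset.sum_congr rfl fun d hd => ?_
  have hdeg : ∑ i ∈ d.support, d i = n := by
    have h := hf (mem_support_iff.mp hd)
    rw [← h]
    exact DFunLike.congr_fun Finsupp.degree_eq_weight_one d
  have hsum : ∑ i : σ, d i = n := by
    rw [← hdeg]
    exact (Finset.sum_subset (Finset.subset_univ _)
      (fun i _ hi => Finsupp.notMem_support_iff.mp hi)).symm
  have key : ∀ i : σ, X i * pderiv i (monomial d (coeff d f))
      = monomial d (coeff d f * (d i : F)) := by
    intro i
    rw [pderiv_monomial]
    by_cases h : d i = 0
    · simp [h]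
    · have hle : Finsupp.single i 1 ≤ d := by
        rw [Finsupp.single_le_iff]; omega
      rw [X, monomial_mul, one_mul, add_tsub_cancel_of_le hle]
  calc ∑ i : σ, X i * pderiv i (monomial d (coeff d f))
      = ∑ i : σ, monomial d (coeff d f * (d i : F)) :=
        Finset.sum_congr rfl fun i _ => key i
    _ = monomial d (coeff d f * (n : F)) := by
        rw [← map_sum, ← Finset.mul_sum, ← Nat.cast_sum, hsum]
    _ = (n : F) • monomial d (coeff d f) := by
        rw [smul_monomial, smul_eq_mul, mul_comm]

/-- Euler's identity, evaluated. -/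
lemma euler_eval {σ : Type*} [Fintype σ] [DecidableEq σ]
    {f : MvPolynomial σ F} {n : ℕ} (hf : f.IsHomogeneous n)
    {S : Type*} [CommRing S] [Algebra F S] (x : σ → S) :
    ∑ i, aeval x (pderiv i f) * x i = (n : S) * aeval x f := by
  have h := congrArg (aeval x) (euler_identity hf)
  simp only [map_sum, map_mul, aeval_X] at h
  calc ∑ i, aeval x (pderiv i f) * x i
      = ∑ i, x i * aeval x (pderiv i f) := by
        exact Finset.sum_congr rfl fun i _ => mul_comm _ _
    _ = aeval x ((n : F) • f) := h
    _ = (n : S) * aeval x f := by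
        rw [map_smul, Algebra.smul_def, map_natCast]

/-- Partial derivatives of homogeneous polynomials are homogeneous. -/
lemma pderiv_isHomogeneous {σ : Type*} [DecidableEq σ] {f : MvPolynomial σ F} {n : ℕ}
    (hf : f.IsHomogeneous n) (i : σ) : (pderiv i f).IsHomogeneous (n - 1) := by
  conv_lhs => rw [f.as_sum]
  rw [map_sum]
  apply IsHomogeneous.sum
  intro d hd
  rw [pderiv_monomial]
  by_cases h : d i = 0
  · rw [h]
    simp only [Nat.cast_zero, mul_zero]
    rw [map_zero]
    exact isHomogeneous_zero _ _ _
  · apply isHomogeneous_monomial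
    have hdd : Finsupp.degree d = n := by
      have hco := hf (mem_support_iff.mp hd)
      rw [← hco]
      exact DFunLike.congr_fun Finsupp.degree_eq_weight_one d
    have hle : Finsupp.single i 1 ≤ d := by
      rw [Finsupp.single_le_iff]; omega
    have hadd : Finsupp.single i 1 + (d - Finsupp.single i 1) = d :=
      add_tsub_cancel_of_le hle
    have hdeg1 : Finsupp.degree (Finsupp.single i (1 : ℕ)) = 1 := by
      simp [Finsupp.degree_single]
    have := congrArg Finsupp.degree hadd
    rw [Finsupp.degree_eq_weight_one] at this ⊢
    rw [map_add] at this
    rw [Finsupp.degree_eq_weight_one] at hdeg1 hdd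
    omega

/-- `aeval` commutes with a ring endomorphism fixing the base field. -/
lemma aeval_comp_ringHom {K : Type*} [Field K] [Algebra F K] (φ : K →+* K)
    (halg : ∀ a : F, φ (algebraMap F K a) = algebraMap F K a)
    {σ : Type*} (f : MvPolynomial σ F) (x : σ → K) :
    aeval (fun i => φ (x i)) f = φ (aeval x f) := by
  rw [aeval_def, aeval_def, eval₂_comp_left φ]
  congr 1
  ext a
  simp [halg]

/-- Elements fixed by the `q`-power map lie in the base field. -/
lemma mem_range_of_pow_card {q : ℕ} [Fintype F] (hq : Fintype.card F = q)
    {K : Type*} [Field K] [Algebra F K] {x : K} (hx : x ^ q = x) :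
    ∃ a : F, algebraMap F K a = x := by
  classical
  have hq2 : 2 ≤ q := hq ▸ Fintype.one_lt_card
  set g : Polynomial K := Polynomial.X ^ q - Polynomial.X with hg
  have hg0 : g ≠ 0 := by
    intro h
    have hc : g.coeff q = 0 := by rw [h]; simp
    rw [hg, Polynomial.coeff_sub, Polynomial.coeff_X_pow, if_pos rfl] at hc
    have hX : (Polynomial.X : Polynomial K).coeff q = 0 := by
      rw [Polynomial.coeff_X, if_neg (by omega : ¬ (1 : ℕ) = q)]
    rw [hX] at hc
    simp at hc
  have hdeg : g.natDegree ≤ q := by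
    refine le_trans (Polynomial.natDegree_sub_le _ _) ?_
    simp only [Polynomial.natDegree_X_pow, Polynomial.natDegree_X, max_le_iff]
    omega
  set T : Finset K := Finset.univ.image (algebraMap F K) with hT
  have hTcard : T.card = q := by
    rw [hT, Finset.card_image_of_injective _ (algebraMap F K).injective,
      Finset.card_univ, hq]
  have hTsub : T ⊆ g.roots.toFinset := by
    intro y hy
    rw [hT, Finset.mem_image] at hy
    obtain ⟨a, -, rfl⟩ := hy
    rw [Multiset.mem_toFinset, Polynomial.mem_roots hg0]
    simp only [hg, Polynomial.IsRoot, Polynomial.eval_sub, Polynomial.eval_pow,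
      Polynomial.eval_X, sub_eq_zero]
    rw [← map_pow]
    congr 1
    rw [← hq]
    exact FiniteField.pow_card a
  have hxmem : x ∈ g.roots.toFinset := by
    rw [Multiset.mem_toFinset, Polynomial.mem_roots hg0]
    simp only [hg, Polynomial.IsRoot, Polynomial.eval_sub, Polynomial.eval_pow,
      Polynomial.eval_X, sub_eq_zero]
    exact hx
  have hcard2 : g.roots.toFinset.card ≤ q :=
    le_trans (Multiset.toFinset_card_le _) (le_trans (Polynomial.card_roots' g) hdeg)
  have hTeq : T = g.roots.toFinset :=
    Finset.eq_of_subset_of_card_le hTsub (by omega)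
  rw [← hTeq, hT, Finset.mem_image] at hxmem
  obtain ⟨a, -, ha⟩ := hxmem
  exact ⟨a, ha⟩

/-- The number of points of the projective plane over `F_q`. -/
lemma projPlane_card {q : ℕ} [Fintype F] (hq : Fintype.card F = q) :
    Nat.card (Projectivization F (Fin 3 → F)) = q ^ 2 + q + 1 := by
  classical
  have hq2 : 2 ≤ q := hq ▸ Fintype.one_lt_card
  -- a bijection (ℙ² × Fˣ) ≃ nonzero vectors
  let g : Projectivization F (Fin 3 → F) × Fˣ → {v : Fin 3 → F // v ≠ 0} :=
    fun Pu => ⟨(Pu.2 : F) • Pu.1.rep, smul_ne_zero (Units.ne_zero _) Pu.1.rep_nonzero⟩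
  have hinj : Function.Injective g := by
    rintro ⟨P, u⟩ ⟨Q, w⟩ h
    have hvec : (u : F) • P.rep = (w : F) • Q.rep := congrArg Subtype.val h
    have hPQ : P = Q := by
      have h1 : Projectivization.mk F ((u : F) • P.rep)
          (smul_ne_zero (Units.ne_zero _) P.rep_nonzero) = P := by
        conv_rhs => rw [← P.mk_rep]
        exact (Projectivization.mk_eq_mk_iff F _ _ _ P.rep_nonzero).mpr ⟨u, rfl⟩
      have h2 : Projectivization.mk F ((w : F) • Q.rep)
          (smul_ne_zero (Units.ne_zero _) Q.rep_nonzero) = Q := by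
        conv_rhs => rw [← Q.mk_rep]
        exact (Projectivization.mk_eq_mk_iff F _ _ _ Q.rep_nonzero).mpr ⟨w, rfl⟩
      rw [← h1, ← h2]
      congr 1
    subst hPQ
    obtain ⟨j, hj⟩ := Function.ne_iff.mp P.rep_nonzero
    have hco : (u : F) * P.rep j = (w : F) * P.rep j := by
      have h5 := congrFun hvec j
      simp only [Pi.smul_apply, smul_eq_mul] at h5
      exact h5
    have huw : (u : F) = (w : F) := mul_right_cancel₀ (by simpa using hj) hco
    simp [Units.ext_iff, huw]
  have hsurj : Function.Surjective g := by
    rintro ⟨v, hv⟩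
    obtain ⟨a, ha⟩ := Projectivization.exists_smul_eq_mk_rep F v hv
    refine ⟨⟨Projectivization.mk F v hv, a⁻¹⟩, ?_⟩
    apply Subtype.ext
    show ((a⁻¹ : Fˣ) : F) • (Projectivization.mk F v hv).rep = v
    rw [← ha, Units.smul_def, smul_smul]
    simp
  have hbij : Function.Bijective g := ⟨hinj, hsurj⟩
  have hfin : Finite (Projectivization F (Fin 3 → F)) := by
    refine Finite.of_surjective
      (fun v : {v : Fin 3 → F // v ≠ 0} => Projectivization.mk F v.1 v.2) ?_
    intro P
    exact ⟨⟨P.rep, P.rep_nonzero⟩, P.mk_rep⟩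
  have hcard_nz : Nat.card {v : Fin 3 → F // v ≠ 0} = q ^ 3 - 1 := by
    rw [Nat.card_eq_fintype_card]
    have h1 : Fintype.card {v : Fin 3 → F // ¬ (v = 0)} =
        Fintype.card (Fin 3 → F) - Fintype.card {v : Fin 3 → F // v = 0} :=
      Fintype.card_subtype_compl _
    have h2 : Fintype.card {v : Fin 3 → F // v = 0} = 1 := Fintype.card_subtype_eq (0 : Fin 3 → F)
    have h3 : Fintype.card (Fin 3 → F) = q ^ 3 := by
      rw [Fintype.card_fun, hq, Fintype.card_fin]
    calc Fintype.card {v : Fin 3 → F // v ≠ 0}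
        = Fintype.card (Fin 3 → F) - Fintype.card {v : Fin 3 → F // v = 0} := h1
      _ = q ^ 3 - 1 := by rw [h2, h3]
  have hcard_prod : Nat.card (Projectivization F (Fin 3 → F)) * (q - 1) = q ^ 3 - 1 := by
    have := Nat.card_eq_of_bijective g hbij
    rw [Nat.card_prod, Nat.card_eq_fintype_card (α := Fˣ), Fintype.card_units, hq,
      hcard_nz] at this
    exact this
  obtain ⟨m, rfl⟩ : ∃ m, q = m + 1 := ⟨q - 1, by omega⟩
  have hm1 : 1 ≤ m := by omega
  have hkey : ((m + 1) ^ 2 + (m + 1) + 1) * m = (m + 1) ^ 3 - 1 := by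
    have h : ((m + 1) ^ 2 + (m + 1) + 1) * m + 1 = (m + 1) ^ 3 := by ring
    omega
  rw [show m + 1 - 1 = m from rfl] at hcard_prod
  refine Nat.eq_of_mul_eq_mul_right (show 0 < m by omega) ?_
  rw [hcard_prod, hkey]

/-- Uniqueness of the tangent line at a point. -/
lemma tangent_unique {f : MvPolynomial (Fin 3) F} {a b : Fin 3 → F}
    {P : ProjPlane (AlgebraicClosure F)}
    (ha : a ≠ 0) (hb : b ≠ 0) (hta : IsTangentAt f a P) (htb : IsTangentAt f b P) :
    Projectivization.mk F a ha = Projectivization.mk F b hb := by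
  obtain ⟨-, c, hc0, hc⟩ := hta
  obtain ⟨-, e, he0, he⟩ := htb
  obtain ⟨j, hj⟩ := Function.ne_iff.mp hb
  simp only [Pi.zero_apply] at hj
  have hinj := (algebraMap F (AlgebraicClosure F)).injective
  have hcross : ∀ i, a i * b j = a j * b i := by
    intro i
    apply hinj
    rw [map_mul, map_mul, hc i, hc j, he i, he j]
    ring
  have haj : a j ≠ 0 := by
    intro h0
    apply ha
    funext i
    have := hcross i
    rw [h0, zero_mul] at this
    have := mul_eq_zero.mp this
    rcases this with h | h
    · exact h
    · exact absurd h hj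
  rw [Projectivization.mk_eq_mk_iff']
  refine ⟨a j / b j, funext fun i => ?_⟩
  show a j / b j * b i = a i
  rw [div_mul_eq_mul_div, eq_comm, eq_div_iff hj, hcross i]


/-- Two projective points with proportional representatives are equal. -/
lemma proj_eq_of_rep_eq_smul {K V : Type*} [DivisionRing K] [AddCommGroup V] [Module K V]
    {P Q : Projectivization K V} {c : K} (h : P.rep = c • Q.rep) : P = Q := by
  rw [← P.mk_rep, ← Q.mk_rep]
  exact (Projectivization.mk_eq_mk_iff' K _ _ P.rep_nonzero Q.rep_nonzero).mpr ⟨c, h.symm⟩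

section Frobenius

variable [Fintype F] {q : ℕ} {f : MvPolynomial (Fin 3) F} {d : ℕ}

/-- A point where an `F`-rational line is tangent satisfies the Frobenius condition. -/
lemma mem_S_of_isTangentAt (hq : Fintype.card F = q) (hfd : f.IsHomogeneous d)
    (φ : AlgebraicClosure F →+* AlgebraicClosure F)
    (hφ : ∀ y : AlgebraicClosure F, φ y = y ^ q)
    {a : Fin 3 → F} {P : ProjPlane (AlgebraicClosure F)}
    (hta : IsTangentAt f a P) :
    OnCurve f P ∧ ∑ i, aeval P.rep (pderiv i f) * P.rep i ^ q = 0 := by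
  obtain ⟨hcur, c, hc0, hc⟩ := hta
  refine ⟨hcur, ?_⟩
  have halg : ∀ b : F, φ (algebraMap F (AlgebraicClosure F) b)
      = algebraMap F (AlgebraicClosure F) b := by
    intro b; rw [hφ, ← map_pow, ← hq, FiniteField.pow_card]
  have heuler : ∑ i, aeval P.rep (pderiv i f) * P.rep i = 0 := by
    rw [euler_eval hfd, show aeval P.rep f = 0 from hcur, mul_zero]
  have hsum0 : ∑ i, (algebraMap F (AlgebraicClosure F) (a i)) * P.rep i = 0 := by
    have h1 : ∀ i : Fin 3, (algebraMap F (AlgebraicClosure F) (a i)) * P.rep i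
        = c * (aeval P.rep (pderiv i f) * P.rep i) := by
      intro i; rw [hc i]; ring
    rw [Finset.sum_congr rfl fun i _ => h1 i, ← Finset.mul_sum, heuler, mul_zero]
  have hsumq : ∑ i, (algebraMap F (AlgebraicClosure F) (a i)) * P.rep i ^ q = 0 := by
    have h1 : ∀ i : Fin 3, (algebraMap F (AlgebraicClosure F) (a i)) * P.rep i ^ q
        = φ ((algebraMap F (AlgebraicClosure F) (a i)) * P.rep i) := by
      intro i; rw [map_mul, halg, hφ]
    rw [Finset.sum_congr rfl fun i _ => h1 i, ← map_sum, hsum0, map_zero]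
  have h2 : ∀ i : Fin 3, aeval P.rep (pderiv i f) * P.rep i ^ q
      = c⁻¹ * ((algebraMap F (AlgebraicClosure F) (a i)) * P.rep i ^ q) := by
    intro i
    rw [hc i]
    field_simp
  rw [Finset.sum_congr rfl fun i _ => h2 i, ← Finset.mul_sum, hsumq, mul_zero]

/-- The Frobenius image of a point of tangency of an `F`-rational line is again a point
of tangency of that line. -/
lemma isTangentAt_frobPt (hq : Fintype.card F = q) (hfd : f.IsHomogeneous d)
    (φ : AlgebraicClosure F →+* AlgebraicClosure F)
    (hφ : ∀ y : AlgebraicClosure F, φ y = y ^ q)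
    {a : Fin 3 → F} {P : ProjPlane (AlgebraicClosure F)}
    (hta : IsTangentAt f a P) :
    IsTangentAt f a (FrobPt q P) := by
  obtain ⟨hcur, c, hc0, hc⟩ := hta
  have halg : ∀ b : F, φ (algebraMap F (AlgebraicClosure F) b)
      = algebraMap F (AlgebraicClosure F) b := by
    intro b; rw [hφ, ← map_pow, ← hq, FiniteField.pow_card]
  have hq1 : 1 ≤ q := by
    have : 2 ≤ q := hq ▸ Fintype.one_lt_card
    omega
  set w : Fin 3 → AlgebraicClosure F := fun i => P.rep i ^ q with hw
  have hwne : w ≠ 0 := by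
    intro h0
    obtain ⟨j, hj⟩ := Function.ne_iff.mp P.rep_nonzero
    have := congrFun h0 j
    simp only [hw, Pi.zero_apply] at this hj
    exact hj (pow_eq_zero_iff (by omega) |>.mp this)
  obtain ⟨u, hu⟩ := Projectivization.exists_smul_eq_mk_rep (AlgebraicClosure F) w hwne
  have hfr : (FrobPt q P) = Projectivization.mk (AlgebraicClosure F) w hwne := rfl
  have hrep : (FrobPt q P).rep = ((u : AlgebraicClosure F)) • w := by
    rw [hfr, ← hu, Units.smul_def]
  have hwf : ∀ g : MvPolynomial (Fin 3) F, aeval w g = φ (aeval P.rep g) := by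
    intro g
    have hwphi : w = fun i => φ (P.rep i) := by funext i; rw [hφ]
    rw [hwphi, aeval_comp_ringHom φ halg g P.rep]
  have hu0 : (u : AlgebraicClosure F) ≠ 0 := Units.ne_zero u
  constructor
  · show aeval (FrobPt q P).rep f = 0
    rw [hrep, aeval_smul_of_isHomogeneous hfd, hwf f,
      show aeval P.rep f = 0 from hcur, map_zero, mul_zero]
  · refine ⟨φ c * ((u : AlgebraicClosure F) ^ (d - 1))⁻¹, ?_, ?_⟩
    · apply mul_ne_zero
      · intro h0
        exact hc0 (φ.injective (by rw [h0, map_zero]))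
      · exact inv_ne_zero (pow_ne_zero _ hu0)
    · intro i
      have hgrad : aeval (FrobPt q P).rep (pderiv i f)
          = (u : AlgebraicClosure F) ^ (d - 1) * φ (aeval P.rep (pderiv i f)) := by
        rw [hrep, aeval_smul_of_isHomogeneous (pderiv_isHomogeneous hfd i), hwf]
      rw [hgrad]
      have hphi : φ (algebraMap F (AlgebraicClosure F) (a i))
          = φ c * φ (aeval P.rep (pderiv i f)) := by
        rw [← map_mul, hc i]
      rw [← halg (a i), hphi]
      field_simp

/-- A point fixed by Frobenius is rational. -/
lemma isRationalPt_of_frobPt_eq (hq : Fintype.card F = q)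
    {P : ProjPlane (AlgebraicClosure F)} (h : FrobPt q P = P) : IsRationalPt P := by
  have hq1 : 1 ≤ q := by
    have : 2 ≤ q := hq ▸ Fintype.one_lt_card
    omega
  set w : Fin 3 → AlgebraicClosure F := fun i => P.rep i ^ q with hw
  have hwne : w ≠ 0 := by
    intro h0
    obtain ⟨j, hj⟩ := Function.ne_iff.mp P.rep_nonzero
    have := congrFun h0 j
    simp only [hw, Pi.zero_apply] at this hj
    exact hj (pow_eq_zero_iff (by omega) |>.mp this)
  have hfr : (FrobPt q P) = Projectivization.mk (AlgebraicClosure F) w hwne := rfl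
  rw [hfr, ← P.mk_rep, Projectivization.mk_eq_mk_iff'] at h
  obtain ⟨c, hcP⟩ := h
  obtain ⟨j, hj⟩ := Function.ne_iff.mp P.rep_nonzero
  simp only [Pi.zero_apply] at hj
  have hci : ∀ i, c * P.rep i = P.rep i ^ q := by
    intro i
    have := congrFun hcP i
    simpa [hw, Pi.smul_apply, smul_eq_mul] using this
  have hc0 : c ≠ 0 := by
    intro h0
    have := hci j
    rw [h0, zero_mul] at this
    exact pow_ne_zero q hj this.symm
  have hfix : ∀ i, (P.rep i / P.rep j) ^ q = P.rep i / P.rep j := by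
    intro i
    rw [div_pow, ← hci i, ← hci j]
    rw [mul_div_mul_left _ _ hc0]
  have hex : ∀ i, ∃ b : F, algebraMap F (AlgebraicClosure F) b = P.rep i / P.rep j :=
    fun i => mem_range_of_pow_card hq (hfix i)
  choose v hv using hex
  refine ⟨v, ?_, P.rep j, hj, ?_⟩
  · intro h0
    have h1 := hv j
    rw [h0] at h1
    simp only [Pi.zero_apply, map_zero] at h1
    rw [div_self hj] at h1
    exact one_ne_zero h1.symm
  · intro i
    rw [hv i, mul_div_cancel₀ _ hj]

/-- The projective plane over a finite field is finite. -/
lemma projectivization_finite : Finite (Projectivization F (Fin 3 → F)) := by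
  refine Finite.of_surjective
    (fun v : {v : Fin 3 → F // v ≠ 0} => Projectivization.mk F v.1 v.2) ?_
  intro P
  exact ⟨⟨P.rep, P.rep_nonzero⟩, P.mk_rep⟩

end Frobenius


/-- Scaling for `eval` of homogeneous polynomials over the base field. -/
lemma eval_smul_of_isHomogeneous' {σ : Type*} {f : MvPolynomial σ F} {n : ℕ}
    (hf : f.IsHomogeneous n) (c : F) (x : σ → F) :
    eval (c • x) f = c ^ n * eval x f := by
  have h := aeval_smul_of_isHomogeneous (S := F) hf c x
  rwa [aeval_def, aeval_def, Algebra.algebraMap_self, eval₂_id, eval₂_id] at h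

/-- `aeval` of an `F`-rational vector is the image of `eval`. -/
lemma aeval_algebraMap_comp {K : Type*} [Field K] [Algebra F K] {σ : Type*}
    (f : MvPolynomial σ F) (v : σ → F) :
    aeval (fun i => algebraMap F K (v i)) f = algebraMap F K (eval v f) := by
  rw [aeval_def, ← eval₂_id (g := v) f, eval₂_comp_left (algebraMap F K) (RingHom.id F) v f]
  rfl

/-- The key inequality in the proof of Theorem 1: if `C` is a smooth plane curve over
`F_q`, the set `{P ∈ C : Φ(P) ∈ T_P(C)}` is finite of cardinality `N`, and every
`F_q`-line is tangent to `C` at some geometric point, then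
`2(q² + q + 1) ≤ 2·#C(F_q) + N`. -/
theorem all_lines_tangent_inequality
    (p q : ℕ) [Fact p.Prime] (hp : 2 < p)
    (F : Type*) [Field F] [Fintype F] [CharP F p] (hcard : Fintype.card F = q)
    (d : ℕ) (f : MvPolynomial (Fin 3) F) (hf0 : f ≠ 0) (hfd : f.IsHomogeneous d)
    (hsmooth : SmoothCurve f)
    (N : ℕ)
    (hNfin : {P : ProjPlane (AlgebraicClosure F) | OnCurve f P ∧
        ∑ i, aeval P.rep (pderiv i f) * P.rep i ^ q = 0}.Finite)
    (hN : {P : ProjPlane (AlgebraicClosure F) | OnCurve f P ∧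
        ∑ i, aeval P.rep (pderiv i f) * P.rep i ^ q = 0}.ncard = N)
    (htan : ∀ a : Fin 3 → F, a ≠ 0 → ∃ P : ProjPlane (AlgebraicClosure F), IsTangentAt f a P) :
    2 * (q ^ 2 + q + 1) ≤ 2 * (RatPoints f).ncard + N := by
  classical
  haveI hPfin : Finite (Projectivization F (Fin 3 → F)) := projectivization_finite
  haveI : CharP (AlgebraicClosure F) p :=
    charP_of_injective_algebraMap (algebraMap F (AlgebraicClosure F)).injective p
  haveI : ExpChar (AlgebraicClosure F) p := ExpChar.prime Fact.out
  obtain ⟨nn, -, hqpow⟩ := FiniteField.card F p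
  have hqp : q = p ^ (nn : ℕ) := by rw [← hcard]; exact hqpow
  set φ : AlgebraicClosure F →+* AlgebraicClosure F :=
    iterateFrobenius (AlgebraicClosure F) p nn with hφdef
  have hφ : ∀ y : AlgebraicClosure F, φ y = y ^ q := by
    intro y
    rw [hφdef, iterateFrobenius_def, hqp]
  set S : Set (ProjPlane (AlgebraicClosure F)) :=
    {P | OnCurve f P ∧ ∑ i, aeval P.rep (pderiv i f) * P.rep i ^ q = 0} with hSdef
  haveI hSfin : Finite ↥S := hNfin.to_subtype
  -- the chosen tangency point of each `F`-rational line
  set Pt : Projectivization F (Fin 3 → F) → ProjPlane (AlgebraicClosure F) :=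
    fun L => (htan L.rep L.rep_nonzero).choose with hPtdef
  have hPt : ∀ L, IsTangentAt f L.rep (Pt L) :=
    fun L => (htan L.rep L.rep_nonzero).choose_spec
  have hmemS : ∀ L, Pt L ∈ S := fun L => mem_S_of_isTangentAt hcard hfd φ hφ (hPt L)
  have htanF : ∀ L, IsTangentAt f L.rep (FrobPt q (Pt L)) :=
    fun L => isTangentAt_frobPt hcard hfd φ hφ (hPt L)
  have hmemS2 : ∀ L, FrobPt q (Pt L) ∈ S :=
    fun L => mem_S_of_isTangentAt hcard hfd φ hφ (htanF L)
  -- a point of tangency determines the line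
  have hline : ∀ (L L' : Projectivization F (Fin 3 → F)) (Q : ProjPlane (AlgebraicClosure F)),
      IsTangentAt f L.rep Q → IsTangentAt f L'.rep Q → L = L' := by
    intro L L' Q h1 h2
    have h3 := tangent_unique L.rep_nonzero L'.rep_nonzero h1 h2
    rwa [Projectivization.mk_rep, Projectivization.mk_rep] at h3
  set R : Set (Projectivization F (Fin 3 → F)) := {L | IsRationalPt (Pt L)} with hRdef
  -- Injection 1 : lines with rational tangency point ↪ rational points of the curve
  have hex1 : ∀ L : ↥R, ∃ Q : ↥(RatPoints f), ∃ c : AlgebraicClosure F,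
      (Pt L.1).rep = c • fun i =>
        algebraMap F (AlgebraicClosure F) ((Q : Projectivization F (Fin 3 → F)).rep i) := by
    rintro ⟨L, hL⟩
    obtain ⟨v, hvne, c, hc0, hvi⟩ := hL
    -- the tangency point is on the curve
    have hcur : aeval (Pt L).rep f = 0 := (hPt L).1
    -- `v` is a rational point of the curve
    have hveq : (Pt L).rep = c • fun i => algebraMap F (AlgebraicClosure F) (v i) := by
      funext i
      rw [hvi i]
      rfl
    have hval : eval v f = 0 := by
      have h1 : aeval (fun i => algebraMap F (AlgebraicClosure F) (v i)) f
          = algebraMap F (AlgebraicClosure F) (eval v f) := aeval_algebraMap_comp f v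
      have h2 : (0 : AlgebraicClosure F)
          = c ^ d * algebraMap F (AlgebraicClosure F) (eval v f) := by
        rw [← h1, ← aeval_smul_of_isHomogeneous hfd, ← hveq, hcur]
      rcases mul_eq_zero.mp h2.symm with h3 | h3
      · exact absurd h3 (pow_ne_zero _ hc0)
      · exact (algebraMap F (AlgebraicClosure F)).injective (by rw [h3, map_zero])
    -- scale `v` to the canonical representative
    obtain ⟨u, hu⟩ := Projectivization.exists_smul_eq_mk_rep F v hvne
    have hurep : (Projectivization.mk F v hvne).rep = (u : F) • v := by
      rw [← hu, Units.smul_def]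
    have hQmem : Projectivization.mk F v hvne ∈ RatPoints f := by
      show eval (Projectivization.mk F v hvne).rep f = 0
      rw [hurep, eval_smul_of_isHomogeneous' hfd, hval, mul_zero]
    refine ⟨⟨Projectivization.mk F v hvne, hQmem⟩, c * (algebraMap F (AlgebraicClosure F) (u : F))⁻¹, ?_⟩
    funext i
    show (Pt L).rep i = c * (algebraMap F (AlgebraicClosure F) (u : F))⁻¹ *
      algebraMap F (AlgebraicClosure F) ((Projectivization.mk F v hvne).rep i)
    rw [hurep]
    show (Pt L).rep i = c * (algebraMap F (AlgebraicClosure F) (u : F))⁻¹ *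
      algebraMap F (AlgebraicClosure F) ((u : F) * v i)
    rw [hvi i, map_mul]
    have hune : algebraMap F (AlgebraicClosure F) (u : F) ≠ 0 := by
      simpa using (Units.ne_zero u)
    field_simp
  choose g1 cg1 hg1 using hex1
  have hg1inj : Function.Injective g1 := by
    intro L L' hEq
    have h1 := hg1 L
    have h2 := hg1 L'
    rw [hEq] at h1
    have hcne : cg1 L' ≠ 0 := by
      intro h0
      apply (Pt L'.1).rep_nonzero
      rw [h2, h0, zero_smul]
    have h3 : (Pt L.1).rep = (cg1 L * (cg1 L')⁻¹) • (Pt L'.1).rep := by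
      rw [h1, h2, smul_smul]
      congr 1
      field_simp
    have h4 : Pt L.1 = Pt L'.1 := proj_eq_of_rep_eq_smul h3
    have h5 : L.1 = L'.1 := hline L.1 L'.1 (Pt L'.1) (h4 ▸ hPt L.1) (hPt L'.1)
    exact Subtype.ext h5
  have hinj1 : Nat.card ↥R ≤ (RatPoints f).ncard := by
    haveI : Finite ↥(RatPoints f) := Subtype.finite
    rw [← Nat.card_coe_set_eq]
    exact Nat.card_le_card_of_injective g1 hg1inj
  -- Injection 2 : (lines with non-rational tangency) × {0,1} ↪ S
  have hnotrat : ∀ L : ↥(Rᶜ), Pt L.1 ≠ FrobPt q (Pt L.1) := by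
    rintro ⟨L, hL⟩ h
    exact hL (isRationalPt_of_frobPt_eq hcard h.symm)
  set g2 : ↥(Rᶜ) × Bool → ↥S := fun Lb =>
    if Lb.2 then ⟨FrobPt q (Pt Lb.1.1), hmemS2 _⟩ else ⟨Pt Lb.1.1, hmemS _⟩ with hg2def
  have hg2inj : Function.Injective g2 := by
    rintro ⟨L, b⟩ ⟨L', b'⟩ h
    have h' : (g2 (L, b)).1 = (g2 (L', b')).1 := congrArg Subtype.val h
    cases b <;> cases b' <;>
      simp only [hg2def, Bool.false_eq_true, if_true, if_false, reduceIte] at h' <;>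
      simp only [Prod.mk.injEq]
    · exact ⟨Subtype.ext (hline L.1 L'.1 (Pt L'.1) (h' ▸ hPt L.1) (hPt L'.1)), trivial⟩
    · exfalso
      have h5 : L.1 = L'.1 := hline L.1 L'.1 (Pt L.1) (hPt L.1) (h' ▸ htanF L'.1)
      rw [← h5] at h'
      exact hnotrat L h'
    · exfalso
      have h5 : L'.1 = L.1 := hline L'.1 L.1 (Pt L'.1) (hPt L'.1) (h'.symm ▸ htanF L.1)
      rw [← h5] at h'
      exact hnotrat L' h'.symm
    · exact ⟨Subtype.ext (hline L.1 L'.1 (FrobPt q (Pt L'.1)) (h' ▸ htanF L.1) (htanF L'.1)),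
        trivial⟩
  have hinj2 : 2 * Nat.card ↥(Rᶜ) ≤ N := by
    have h6 := Nat.card_le_card_of_injective g2 hg2inj
    rw [Nat.card_prod] at h6
    have hb : Nat.card Bool = 2 := by simp [Nat.card_eq_fintype_card]
    have hSN : Nat.card ↥S = N := by rw [Nat.card_coe_set_eq]; exact hN
    rw [hb, hSN] at h6
    omega
  -- counting the lines
  have hcards : Nat.card ↥R + Nat.card ↥(Rᶜ) = q ^ 2 + q + 1 := by
    have h7 := Set.ncard_add_ncard_compl R (Set.toFinite R) (Set.toFinite Rᶜ)
    rw [projPlane_card hcard] at h7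
    rwa [← Nat.card_coe_set_eq, ← Nat.card_coe_set_eq] at h7
  omega

end
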